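/- arXiv:1311.2123 — 5 statements merged into one kernel-verified Lean document; each statement's English description precedes it below -/
import Mathlib

section
/- Let F be a finite field with |F| = q and let m, n be positive integers with n ≤ m. If A is a random m×n matrix whose entries are chosen independently and uniformly at random from F, then the probability that A does not have full column rank satisfies Pr[rank(A) < n] ≤ 1/((q−1)·q^(m−n)). -/
private lemma aux_one_sub_sum_le_prod {ι : Type*} (s : Finset ι) (f : ι → ℝ)
    (h0 : ∀ i ∈ s, 0 ≤ f i) (h1 : ∀ i ∈ s, f i ≤ 1) :
    1 - ∑ i ∈ s, f i ≤ ∏ i ∈ s, (1 - f i) := by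
  classical
  induction s using Finset.induction with
  | empty => simp
  | @insert a s hx ih =>
    rw [Finset.sum_insert hx, Finset.prod_insert hx]
    have h0a := h0 a (Finset.mem_insert_self a s)
    have h1a := h1 a (Finset.mem_insert_self a s)
    have ihs := ih (fun i hi => h0 i (Finset.mem_insert_of_mem hi))
      (fun i hi => h1 i (Finset.mem_insert_of_mem hi))
    have hsum : 0 ≤ ∑ i ∈ s, f i := Finset.sum_nonneg fun i hi => h0 i (Finset.mem_insert_of_mem hi)
    nlinarith [mul_nonneg h0a hsum, mul_le_mul_of_nonneg_left ihs (sub_nonneg.2 h1a)]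

open Matrix in
/-- If `A` is a uniformly random `m × n` matrix over a finite field `F` with `|F| = q`
and `n ≤ m`, then `Pr[rank A < n] ≤ 1 / ((q - 1) * q ^ (m - n))`. -/
theorem stmt_0 (F : Type) [Field F] [Fintype F] (q m n : ℕ)
    (hq : Fintype.card F = q) (hm : 0 < m) (hn : 0 < n) (hmn : n ≤ m) :
    (Nat.card {A : Matrix (Fin m) (Fin n) F // A.rank < n} : ℝ) /
      (Nat.card (Matrix (Fin m) (Fin n) F) : ℝ) ≤
      1 / (((q : ℝ) - 1) * (q : ℝ) ^ (m - n)) := by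
  classical
  subst hq
  set q := Fintype.card F with hq
  have hq2 : 2 ≤ q := Fintype.one_lt_card
  -- total count
  have htot : Nat.card (Matrix (Fin m) (Fin n) F) = q ^ (m * n) := by
    simp only [Nat.card_eq_fintype_card]
    show Fintype.card (Fin m → Fin n → F) = q ^ (m * n)
    simp only [Fintype.card_fun, Fintype.card_fin]
    rw [← pow_mul, mul_comm]
  -- rank < n ↔ columns not linearly independent
  have hrank : ∀ A : Matrix (Fin m) (Fin n) F,
      A.rank < n ↔ ¬ LinearIndependent F Aᵀ := by
    intro A
    erw [linearIndependent_iff_card_eq_finrank_span]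
    constructor
    · intro h hli
      erw [Set.finrank, ← Matrix.rank_eq_finrank_span_cols, Fintype.card_fin] at hli
      omega
    · intro h
      rcases lt_or_eq_of_le A.rank_le_width with h' | h'
      · exact h'
      · exact absurd (by erw [Set.finrank, ← Matrix.rank_eq_finrank_span_cols,
          Fintype.card_fin, h']) h
  -- count of full-rank matrices
  have hfull : Nat.card {A : Matrix (Fin m) (Fin n) F // LinearIndependent F Aᵀ} =
      ∏ i : Fin n, (q ^ m - q ^ (i : ℕ)) := by
    have e : {A : Matrix (Fin m) (Fin n) F // LinearIndependent F Aᵀ} ≃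
        {s : Fin n → (Fin m → F) // LinearIndependent F s} :=
      { toFun := fun A => ⟨A.1ᵀ, A.2⟩
        invFun := fun s => ⟨(Matrix.of s.1)ᵀ, s.2⟩
        left_inv := fun A => rfl
        right_inv := fun s => rfl }
    rw [Nat.card_congr e, card_linearIndependent (K := F) (V := Fin m → F)
      (by simp [Module.finrank_fintype_fun_eq_card, hmn])]
    simp [Module.finrank_fintype_fun_eq_card]
    rfl
  -- count of bad matrices
  have hbad : Nat.card {A : Matrix (Fin m) (Fin n) F // A.rank < n} =
      q ^ (m * n) - ∏ i : Fin n, (q ^ m - q ^ (i : ℕ)) := by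
    rw [← htot, ← hfull]
    simp only [Nat.card_eq_fintype_card]
    rw [Fintype.card_congr (Equiv.subtypeEquivRight hrank)]
    exact Fintype.card_subtype_compl _
  -- now the real-number estimate
  rw [hbad, htot]
  have hq0 : (0:ℝ) < (q:ℝ) := by positivity
  have hqm : (0:ℝ) < (q:ℝ) ^ m := by positivity
  have hqmn : (0:ℝ) < (q:ℝ) ^ (m * n) := by positivity
  have hd : (0:ℝ) < ((q:ℝ) - 1) * (q:ℝ) ^ (m - n) := by
    have : (1:ℝ) ≤ (q:ℝ) - 1 := by
      have : (2:ℝ) ≤ (q:ℝ) := by exact_mod_cast hq2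
      linarith
    positivity
  have hPle : (∏ i : Fin n, (q ^ m - q ^ (i : ℕ))) ≤ q ^ (m * n) := by
    calc (∏ i : Fin n, (q ^ m - q ^ (i : ℕ))) ≤ ∏ _i : Fin n, q ^ m :=
          Finset.prod_le_prod' fun i _ => Nat.sub_le _ _
      _ = q ^ (m * n) := by rw [Finset.prod_const, Finset.card_univ, Fintype.card_fin, ← pow_mul]
  have hPcast : ((∏ i : Fin n, (q ^ m - q ^ (i : ℕ)) : ℕ) : ℝ) =
      ∏ i : Fin n, ((q:ℝ) ^ m - (q:ℝ) ^ (i : ℕ)) := by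
    rw [Nat.cast_prod]
    refine Finset.prod_congr rfl fun i _ => ?_
    rw [Nat.cast_sub (Nat.pow_le_pow_right (by omega) (by omega))]
    push_cast
    ring
  set P : ℝ := ∏ i : Fin n, ((q:ℝ) ^ m - (q:ℝ) ^ (i : ℕ)) with hPdef
  have hprod : P = (q:ℝ) ^ (m * n) * ∏ i : Fin n, (1 - (q:ℝ) ^ (i:ℕ) / (q:ℝ) ^ m) := by
    rw [hPdef]
    calc ∏ i : Fin n, ((q:ℝ) ^ m - (q:ℝ) ^ (i:ℕ))
        = ∏ i : Fin n, ((q:ℝ) ^ m * (1 - (q:ℝ) ^ (i:ℕ) / (q:ℝ) ^ m)) := by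
          refine Finset.prod_congr rfl fun i _ => ?_
          field_simp
      _ = (∏ _i : Fin n, (q:ℝ) ^ m) * ∏ i : Fin n, (1 - (q:ℝ) ^ (i:ℕ) / (q:ℝ) ^ m) :=
          Finset.prod_mul_distrib
      _ = (q:ℝ) ^ (m * n) * ∏ i : Fin n, (1 - (q:ℝ) ^ (i:ℕ) / (q:ℝ) ^ m) := by
          rw [Finset.prod_const, Finset.card_univ, Fintype.card_fin, ← pow_mul]
  have haux : 1 - (∑ i : Fin n, (q:ℝ) ^ (i:ℕ) / (q:ℝ) ^ m) ≤
      ∏ i : Fin n, (1 - (q:ℝ) ^ (i:ℕ) / (q:ℝ) ^ m) := by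
    refine aux_one_sub_sum_le_prod _ _ (fun i _ => by positivity) (fun i _ => ?_)
    rw [div_le_one hqm]
    exact_mod_cast Nat.pow_le_pow_right (by omega) (by omega)
  have hS : (∑ i : Fin n, (q:ℝ) ^ (i:ℕ) / (q:ℝ) ^ m) * (((q:ℝ) - 1) * (q:ℝ) ^ (m - n)) ≤ 1 := by
    have hsum : (∑ i : Fin n, (q:ℝ) ^ (i:ℕ)) * ((q:ℝ) - 1) = (q:ℝ) ^ n - 1 := by
      rw [Fin.sum_univ_eq_sum_range]
      exact geom_sum_mul _ n
    have hpowadd : (q:ℝ) ^ (m - n) * (q:ℝ) ^ n = (q:ℝ) ^ m := by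
      rw [← pow_add]
      congr 1
      omega
    rw [← Finset.sum_div, div_mul_eq_mul_div, div_le_one hqm]
    nlinarith [pow_pos hq0 (m - n)]
  rw [Nat.cast_sub hPle, hPcast, Nat.cast_pow, div_le_div_iff₀ hqmn hd]
  have hstep : (q:ℝ) ^ (m * n) - P ≤
      (q:ℝ) ^ (m * n) * (∑ i : Fin n, (q:ℝ) ^ (i:ℕ) / (q:ℝ) ^ m) := by
    nlinarith [hprod, haux, hqmn.le]
  calc ((q:ℝ) ^ (m * n) - P) * (((q:ℝ) - 1) * (q:ℝ) ^ (m - n))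
      ≤ (q:ℝ) ^ (m * n) * (∑ i : Fin n, (q:ℝ) ^ (i:ℕ) / (q:ℝ) ^ m) *
        (((q:ℝ) - 1) * (q:ℝ) ^ (m - n)) := by
        exact mul_le_mul_of_nonneg_right hstep hd.le
    _ ≤ (q:ℝ) ^ (m * n) * 1 := by
        rw [mul_assoc]
        exact mul_le_mul_of_nonneg_left hS hqmn.le
    _ = 1 * (q:ℝ) ^ (m * n) := by ring
end

section
/- In the packet reception model with parameters m, n, g and finite field F, for every i ∈ {0, 1, …, g−1} and every ε > 0 there exists q0 such that for every finite field F with |F| ≥ q0, |Pr[rank of generation 1 = i] − C(m,i)·(1/n)^i·(1−1/n)^(m−i)| < ε. That is, as the field size tends to infinity, the probability that a fixed generation has rank i (for i < g) converges to the binomial probability that exactly i of the m packets are assigned to that generation. -/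
open Submodule Module Finset

/-- In the packet reception model, a configuration assigns to each of the `m` received
packets a generation index in `Fin n` and a coefficient vector in `Fin g → F`.
The rank of generation `j` is the rank of the matrix over `F` whose rows are the
coefficient vectors of the packets assigned to generation `j`. -/
noncomputable def genRank (m n g : ℕ) (F : Type*) [Field F]
    (ω : Fin m → Fin n × (Fin g → F)) (j : Fin n) : ℕ :=
  (Matrix.of fun (p : {p : Fin m // (ω p).1 = j}) (k : Fin g) => (ω p.1).2 k).rank

section Aux

variable {F : Type} [Field F] {m n g : ℕ}

lemma span_growth (S : Finset (Fin m)) (v : Fin m → (Fin g → F))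
    (h : ∀ p ∈ S, v p ∈ Submodule.span F (v '' {p' | p' ∈ S ∧ p' < p}) →
          Submodule.span F (v '' {p' | p' ∈ S ∧ p' < p}) = ⊤) :
    finrank F (Submodule.span F (v '' ↑S)) = min S.card g := by
  induction S using Finset.strongInduction with
  | _ S ih =>
    rcases S.eq_empty_or_nonempty with rfl | hne
    · simp
    · set p₀ := S.max' hne with hp₀
      have hp₀S : p₀ ∈ S := S.max'_mem hne
      set S' := S.erase p₀ with hS'
      have hsub : S' ⊂ S := Finset.erase_ssubset hp₀S
      have hset : {p' | p' ∈ S ∧ p' < p₀} = (↑S' : Set (Fin m)) := by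
        ext p'
        simp only [Set.mem_setOf_eq, hS', Finset.coe_erase, Set.mem_diff,
          Finset.mem_coe, Set.mem_singleton_iff]
        constructor
        · rintro ⟨h1, h2⟩; exact ⟨h1, fun e => absurd (e ▸ h2) (lt_irrefl _)⟩
        · rintro ⟨h1, h2⟩; exact ⟨h1, lt_of_le_of_ne (S.le_max' _ h1) h2⟩
      have hset' : ∀ p ∈ S', {p' | p' ∈ S ∧ p' < p} = {p' | p' ∈ S' ∧ p' < p} := by
        intro p hp
        have hplt : p < p₀ := lt_of_le_of_ne (S.le_max' _ (Finset.mem_of_mem_erase hp))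
          (Finset.ne_of_mem_erase hp)
        ext p'
        simp only [Set.mem_setOf_eq, hS', Finset.mem_erase]
        constructor
        · rintro ⟨h1, h2⟩; exact ⟨⟨fun e => absurd (e ▸ (h2.trans hplt)) (lt_irrefl _), h1⟩, h2⟩
        · rintro ⟨⟨_, h1⟩, h2⟩; exact ⟨h1, h2⟩
      have hIH : finrank F (Submodule.span F (v '' ↑S')) = min S'.card g := by
        apply ih S' hsub
        intro p hp hmem
        rw [← hset' p hp] at hmem ⊢
        exact h p (Finset.mem_of_mem_erase hp) hmem
      have hcard : S.card = S'.card + 1 := by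
        have hpos : 0 < S.card := Finset.card_pos.2 hne
        rw [hS', Finset.card_erase_of_mem hp₀S]
        omega
      have hspanS : Submodule.span F (v '' ↑S) = (F ∙ v p₀) ⊔ Submodule.span F (v '' ↑S') := by
        have : (↑S : Set (Fin m)) = insert p₀ ↑S' := by
          rw [hS', Finset.coe_erase]
          rw [Set.insert_diff_singleton, Set.insert_eq_self.2 (by exact hp₀S)]
        rw [this, Set.image_insert_eq, Submodule.span_insert]
      set W := Submodule.span F (v '' ↑S') with hW
      have hfing : finrank F (Fin g → F) = g := by simp
      by_cases hv : v p₀ ∈ W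
      · have htop : W = ⊤ := by
          have := h p₀ hp₀S
          rw [hset] at this
          exact this hv
        have h1 : Submodule.span F (v '' ↑S) = ⊤ := by
          rw [hspanS, htop]; simp
        rw [h1]
        have hSg : g ≤ S'.card := by
          by_contra hc
          push_neg at hc
          rw [htop] at hIH
          rw [finrank_top, hfing] at hIH
          omega
        rw [finrank_top, hfing]
        omega
      · have hWne : W ≠ ⊤ := fun e => hv (e ▸ Submodule.mem_top)
        have hWlt : finrank F W < g := by
          have := Submodule.finrank_lt (K := F) (V := Fin g → F) hWne
          rwa [hfing] at this
        have hS'lt : S'.card < g := by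
          rw [hIH] at hWlt; omega
        have hvne : v p₀ ≠ 0 := fun e => hv (e ▸ W.zero_mem)
        have hlt : W < (F ∙ v p₀) ⊔ W :=
          lt_of_le_of_ne le_sup_right (fun e => hv (e ▸ (le_sup_left (a := F ∙ v p₀) (b := W)
            (Submodule.mem_span_singleton_self _))))
        have hub : finrank F ((F ∙ v p₀) ⊔ W : Submodule F (Fin g → F)) ≤ finrank F W + 1 := by
          have h2 := Submodule.finrank_sup_add_finrank_inf_eq (F ∙ v p₀) W
          have h3 : finrank F (F ∙ v p₀ : Submodule F (Fin g → F)) = 1 :=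
            finrank_span_singleton hvne
          omega
        have hlb : finrank F W < finrank F ((F ∙ v p₀) ⊔ W : Submodule F (Fin g → F)) :=
          Submodule.finrank_lt_finrank_of_lt hlt
        rw [hspanS]
        rw [hIH] at hub hlb
        have : finrank F ((F ∙ v p₀) ⊔ W : Submodule F (Fin g → F)) = S'.card + 1 := by omega
        rw [this]
        omega

lemma genRank_eq_finrank (ω : Fin m → Fin n × (Fin g → F)) (j : Fin n) :
    genRank m n g F ω j =
      finrank F (Submodule.span F ((fun p => (ω p).2) '' {p | (ω p).1 = j})) := by
  have hr : Set.range (Matrix.of fun (p : {p : Fin m // (ω p).1 = j}) (k : Fin g) => (ω p.1).2 k)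
      = (fun p => (ω p).2) '' {p | (ω p).1 = j} := by
    rw [show (Matrix.of fun (p : {p : Fin m // (ω p).1 = j}) (k : Fin g) => (ω p.1).2 k)
        = (fun p => (ω p).2) ∘ (Subtype.val : {p : Fin m // (ω p).1 = j} → Fin m) from rfl,
      Set.range_comp, Subtype.range_coe_subtype]
  rw [genRank, Matrix.rank_eq_finrank_span_row, Matrix.row, hr]

/-- The span of the coefficient vectors of earlier packets in generation `j0`. -/
def Wspan (j0 : Fin n) (p : Fin m) (ω : Fin m → Fin n × (Fin g → F)) :
    Submodule F (Fin g → F) :=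
  Submodule.span F ((fun p' => (ω p').2) '' {p' | (ω p').1 = j0 ∧ p' < p})

/-- The "bad" set for packet `p`. -/
def Abad (j0 : Fin n) (p : Fin m) (ω : Fin m → Fin n × (Fin g → F)) :
    Set (Fin n × (Fin g → F)) :=
  {x | x.1 = j0 ∧ x.2 ∈ Wspan j0 p ω ∧ Wspan j0 p ω ≠ ⊤}

lemma rank_eq_min_of_nobad (j0 : Fin n) (ω : Fin m → Fin n × (Fin g → F))
    (hnb : ∀ p : Fin m, ω p ∉ Abad j0 p ω) :
    genRank m n g F ω j0
      = min (Finset.univ.filter (fun p => (ω p).1 = j0)).card g := by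
  rw [genRank_eq_finrank]
  have hset : {p | (ω p).1 = j0} = ↑(Finset.univ.filter (fun p => (ω p).1 = j0)) := by
    ext p; simp
  rw [hset]
  apply span_growth
  intro p hp hmem
  simp only [Finset.mem_filter, Finset.mem_univ, true_and] at hp
  have hset2 : {p' | p' ∈ Finset.univ.filter (fun p' => (ω p').1 = j0) ∧ p' < p}
      = {p' | (ω p').1 = j0 ∧ p' < p} := by
    ext p'; simp
  rw [hset2] at hmem ⊢
  have := hnb p
  simp only [Abad, Wspan, Set.mem_setOf_eq] at this
  push_neg at this
  exact this hp hmem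

lemma count_pointwise {X : Type} [Fintype X] (p : Fin m)
    (A : Fin m → (Fin m → X) → Set X) (c : ℕ)
    (hA : ∀ f f' : Fin m → X, (∀ q, q ≠ p → f q = f' q) → A p f = A p f')
    (hc : ∀ f, (A p f).ncard ≤ c)
    [DecidablePred fun f : Fin m → X => f p ∈ A p f] :
    (Finset.univ.filter (fun f : Fin m → X => f p ∈ A p f)).card
      ≤ c * Fintype.card X ^ (m - 1) := by
  classical
  set Φ : (Fin m → X) → ({q : Fin m // q ≠ p} → X) := fun f q => f q.1 with hΦ
  have key : (Finset.univ.filter (fun f : Fin m → X => f p ∈ A p f)).card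
      ≤ c * Fintype.card ({q : Fin m // q ≠ p} → X) := by
    have := Finset.card_le_mul_card_image_of_maps_to
      (f := Φ) (s := Finset.univ.filter (fun f : Fin m → X => f p ∈ A p f))
      (t := Finset.univ) (fun a _ => Finset.mem_univ _) c ?_
    · simpa using this
    · intro r _
      set s := {a ∈ Finset.univ.filter (fun f : Fin m → X => f p ∈ A p f) | Φ a = r} with hs
      rcases s.eq_empty_or_nonempty with he | ⟨f₀, hf₀⟩
      · simp [he]
      · have hf₀' : f₀ p ∈ A p f₀ ∧ Φ f₀ = r := by
          have := hf₀
          rw [hs] at this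
          simp only [Finset.mem_filter, Finset.mem_univ, true_and] at this
          exact this
        have hAeq : ∀ f ∈ s, A p f = A p f₀ := by
          intro f hf
          rw [hs] at hf
          simp only [Finset.mem_filter, Finset.mem_univ, true_and] at hf
          apply hA
          intro q hq
          have : Φ f ⟨q, hq⟩ = Φ f₀ ⟨q, hq⟩ := by rw [hf.2, hf₀'.2]
          exact this
        have hinj : Set.InjOn (fun f : Fin m → X => f p) (s : Set (Fin m → X)) := by
          intro f hf f' hf' hpp
          rw [hs] at hf hf'
          simp only [Finset.coe_filter, Finset.mem_univ, true_and, Set.mem_setOf_eq] at hf hf'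
          funext q
          by_cases hq : q = p
          · subst hq; exact hpp
          · have : Φ f ⟨q, hq⟩ = Φ f' ⟨q, hq⟩ := by rw [hf.2, hf'.2]
            exact this
        have hmaps : ∀ f ∈ s, (fun f : Fin m → X => f p) f ∈ (A p f₀).toFinset := by
          intro f hf
          rw [Set.mem_toFinset, ← hAeq f hf]
          have := hf
          rw [hs] at this
          simp only [Finset.mem_filter, Finset.mem_univ, true_and] at this
          exact this.1
        calc s.card ≤ (A p f₀).toFinset.card := Finset.card_le_card_of_injOn _ hmaps hinj
          _ = (A p f₀).ncard := by rw [Set.ncard_eq_toFinset_card']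
          _ ≤ c := hc f₀
  have hcard : Fintype.card ({q : Fin m // q ≠ p} → X) = Fintype.card X ^ (m - 1) := by
    rw [Fintype.card_fun]
    congr 1
    rw [Fintype.card_subtype_compl, Fintype.card_subtype_eq, Fintype.card_fin]
  rwa [hcard] at key

lemma ncard_proper [Fintype F] (hg : 0 < g) (j0 : Fin n)
    (W : Submodule F (Fin g → F)) (hW : W ≠ ⊤) :
    ({x : Fin n × (Fin g → F) | x.1 = j0 ∧ x.2 ∈ W}).ncard ≤ Fintype.card F ^ (g - 1) := by
  classical
  have hsub : {x : Fin n × (Fin g → F) | x.1 = j0 ∧ x.2 ∈ W}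
      ⊆ Prod.mk j0 '' (W : Set (Fin g → F)) := by
    rintro ⟨a, b⟩ ⟨rfl, hb⟩
    exact ⟨b, hb, rfl⟩
  have h1 : ({x : Fin n × (Fin g → F) | x.1 = j0 ∧ x.2 ∈ W}).ncard
      ≤ (Prod.mk j0 '' (W : Set (Fin g → F))).ncard :=
    Set.ncard_le_ncard hsub (Set.toFinite _)
  have h2 : (Prod.mk j0 '' (W : Set (Fin g → F))).ncard ≤ (W : Set (Fin g → F)).ncard :=
    Set.ncard_image_le (Set.toFinite _)
  have h3 : (W : Set (Fin g → F)).ncard = Nat.card W := (Nat.card_coe_set_eq _).symm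
  have h4 : Nat.card W = Fintype.card F ^ finrank F W := by
    rw [Nat.card_eq_fintype_card]
    exact Module.card_eq_pow_finrank (K := F) (V := W)
  have h5 : finrank F W ≤ g - 1 := by
    have := Submodule.finrank_lt (K := F) (V := Fin g → F) hW
    simp only [finrank_pi, Fintype.card_fin] at this
    omega
  have h6 : Fintype.card F ^ finrank F W ≤ Fintype.card F ^ (g - 1) :=
    Nat.pow_le_pow_right Fintype.card_pos h5
  omega

lemma count_binom (j0 : Fin n) (i : ℕ) :
    (Finset.univ.filter (fun a : Fin m → Fin n =>
        (Finset.univ.filter (fun p => a p = j0)).card = i)).card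
      = m.choose i * (n - 1) ^ (m - i) := by
  classical
  rw [Finset.card_eq_sum_card_fiberwise
    (f := fun a : Fin m → Fin n => Finset.univ.filter (fun p => a p = j0))
    (t := Finset.univ.powersetCard i)
    (by intro a ha
        simp only [Finset.mem_coe, Finset.mem_filter, Finset.mem_univ, true_and] at ha
        rw [Finset.mem_coe, Finset.mem_powersetCard_univ]
        exact ha)]
  have hfiber : ∀ S ∈ Finset.univ.powersetCard i,
      ((Finset.univ.filter (fun a : Fin m → Fin n =>
        (Finset.univ.filter (fun p => a p = j0)).card = i)).filter
        (fun a => Finset.univ.filter (fun p => a p = j0) = S)).card = (n - 1) ^ (m - i) := by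
    intro S hS
    rw [Finset.mem_powersetCard_univ] at hS
    have heq : ((Finset.univ.filter (fun a : Fin m → Fin n =>
        (Finset.univ.filter (fun p => a p = j0)).card = i)).filter
        (fun a => Finset.univ.filter (fun p => a p = j0) = S))
        = Finset.univ.filter (fun a : Fin m → Fin n => ∀ p, a p = j0 ↔ p ∈ S) := by
      ext a
      simp only [Finset.mem_filter, Finset.mem_univ, true_and]
      constructor
      · rintro ⟨_, h2⟩ p
        rw [← h2]
        simp
      · intro h
        have : Finset.univ.filter (fun p => a p = j0) = S := by
          ext p; simp [h p]
        exact ⟨this ▸ hS, this⟩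
    rw [heq]
    have hcard : (Finset.univ.filter (fun a : Fin m → Fin n => ∀ p, a p = j0 ↔ p ∈ S)).card
        = Fintype.card {a : Fin m → Fin n // ∀ p, a p = j0 ↔ p ∈ S} := by
      rw [Fintype.card_subtype]
    rw [hcard, Fintype.card_congr (Equiv.subtypePiEquivPi
      (p := fun p (x : Fin n) => x = j0 ↔ p ∈ S)), Fintype.card_pi]
    have hfac : ∀ p : Fin m, Fintype.card {x : Fin n // x = j0 ↔ p ∈ S}
        = if p ∈ S then 1 else n - 1 := by
      intro p
      by_cases hp : p ∈ S
      · rw [if_pos hp, Fintype.card_congr (Equiv.subtypeEquivRight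
          (q := fun x => x = j0) (fun x => by simp [hp])),
          Fintype.card_subtype_eq]
      · rw [if_neg hp, Fintype.card_congr (Equiv.subtypeEquivRight
          (q := fun x => ¬ x = j0) (fun x => by simp [hp])),
          Fintype.card_subtype_compl, Fintype.card_subtype_eq, Fintype.card_fin]
    rw [Finset.prod_congr rfl (fun p _ => hfac p), Finset.prod_ite, Finset.prod_const,
      Finset.prod_const, one_pow, one_mul]
    congr 1
    have : Finset.univ.filter (fun p : Fin m => ¬ p ∈ S) = Sᶜ := by
      ext p; simp
    rw [this, Finset.card_compl, Fintype.card_fin, hS]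
  rw [Finset.sum_congr rfl hfiber, Finset.sum_const, Finset.card_powersetCard,
    Finset.card_univ, Fintype.card_fin, smul_eq_mul]

lemma count_fst {V : Type} [Fintype V] (P : (Fin m → Fin n) → Prop)
    [DecidablePred P] :
    (Finset.univ.filter (fun ω : Fin m → Fin n × V => P (fun p => (ω p).1))).card
      = (Finset.univ.filter P).card * Fintype.card (Fin m → V) := by
  classical
  rw [← Fintype.card_subtype, ← Fintype.card_subtype, ← Fintype.card_prod]
  exact Fintype.card_congr
    (((Equiv.arrowProdEquivProdArrow (Fin m) (fun _ => Fin n) (fun _ => V)).subtypeEquiv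
      (fun ω => Iff.rfl)).trans (Equiv.prodSubtypeFstEquivSubtypeProd))

end Aux

/-- As the field size tends to infinity, the probability that a fixed generation has
rank `i < g` converges to the binomial probability that exactly `i` of the `m` packets
are assigned to that generation. -/
theorem stmt_2 (m n g : ℕ) (hm : 0 < m) (hn : 0 < n) (hg : 0 < g)
    (i : ℕ) (hi : i < g) (ε : ℝ) (hε : 0 < ε) :
    ∃ q0 : ℕ, ∀ (F : Type) [Field F] [Fintype F], q0 ≤ Fintype.card F →
      |(Nat.card {ω : Fin m → Fin n × (Fin g → F) //
            genRank m n g F ω ⟨0, hn⟩ = i} : ℝ) /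
          (Nat.card (Fin m → Fin n × (Fin g → F)) : ℝ) -
        (m.choose i : ℝ) * (1 / n) ^ i * (1 - 1 / n) ^ (m - i)| < ε := by
  classical
  refine ⟨⌈(m : ℝ) / ε⌉₊ + 1, ?_⟩
  intro F _ _ hq
  set q := Fintype.card F with hqdef
  have hq2 : 0 < q := Fintype.card_pos
  set j0 : Fin n := ⟨0, hn⟩ with hj0
  set cardP := (Finset.univ.filter
    (fun ω : Fin m → Fin n × (Fin g → F) => genRank m n g F ω j0 = i)).card with hcardP
  set cardB := (Finset.univ.filter (fun ω : Fin m → Fin n × (Fin g → F) =>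
      (Finset.univ.filter (fun p => (ω p).1 = j0)).card = i)).card with hcardB
  set cardBad := (Finset.univ.filter (fun ω : Fin m → Fin n × (Fin g → F) =>
      ∃ p, ω p ∈ Abad j0 p ω)).card with hcardBad
  clear_value j0 cardP cardB cardBad q
  have hclass : ∀ ω : Fin m → Fin n × (Fin g → F), (¬ ∃ p, ω p ∈ Abad j0 p ω) →
      (genRank m n g F ω j0 = i ↔
        (Finset.univ.filter (fun p => (ω p).1 = j0)).card = i) := by
    intro ω hω
    push_neg at hω
    rw [rank_eq_min_of_nobad j0 ω hω]
    clear * - hi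
    omega
  have hPB : cardP ≤ cardB + cardBad := by
    rw [hcardP, hcardB, hcardBad]
    calc (Finset.univ.filter (fun ω : Fin m → Fin n × (Fin g → F) => genRank m n g F ω j0 = i)).card ≤ (Finset.univ.filter (fun ω : Fin m → Fin n × (Fin g → F) =>
          (Finset.univ.filter (fun p => (ω p).1 = j0)).card = i) ∪
        Finset.univ.filter (fun ω : Fin m → Fin n × (Fin g → F) => ∃ p, ω p ∈ Abad j0 p ω)).card := by
          apply Finset.card_le_card
          intro ω hω
          simp only [Finset.mem_filter, Finset.mem_univ, true_and] at hω
          rw [Finset.mem_union]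
          by_cases hb : ∃ p, ω p ∈ Abad j0 p ω
          · exact Or.inr (by simp only [Finset.mem_filter, Finset.mem_univ, true_and]; exact hb)
          · exact Or.inl (by simp only [Finset.mem_filter, Finset.mem_univ, true_and]
                             exact (hclass ω hb).1 hω)
      _ ≤ _ + _ := Finset.card_union_le _ _
  have hBP : cardB ≤ cardP + cardBad := by
    rw [hcardP, hcardB, hcardBad]
    calc (Finset.univ.filter (fun ω : Fin m → Fin n × (Fin g → F) =>
          (Finset.univ.filter (fun p => (ω p).1 = j0)).card = i)).card ≤ (Finset.univ.filter
          (fun ω : Fin m → Fin n × (Fin g → F) => genRank m n g F ω j0 = i) ∪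
        Finset.univ.filter (fun ω : Fin m → Fin n × (Fin g → F) => ∃ p, ω p ∈ Abad j0 p ω)).card := by
          apply Finset.card_le_card
          intro ω hω
          simp only [Finset.mem_filter, Finset.mem_univ, true_and] at hω
          rw [Finset.mem_union]
          by_cases hb : ∃ p, ω p ∈ Abad j0 p ω
          · exact Or.inr (by simp only [Finset.mem_filter, Finset.mem_univ, true_and]; exact hb)
          · exact Or.inl (by simp only [Finset.mem_filter, Finset.mem_univ, true_and]
                             exact (hclass ω hb).2 hω)
      _ ≤ _ + _ := Finset.card_union_le _ _
  have hXcard : Fintype.card (Fin n × (Fin g → F)) = n * q ^ g := by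
    rw [hqdef, Fintype.card_prod, Fintype.card_fin, Fintype.card_fun, Fintype.card_fin]
  have hBadBound : cardBad ≤ m * (q ^ (g-1) * (n * q ^ g) ^ (m-1)) := by
    rw [hcardBad, ← hXcard]
    calc (Finset.univ.filter (fun ω : Fin m → Fin n × (Fin g → F) => ∃ p, ω p ∈ Abad j0 p ω)).card ≤ (Finset.univ.biUnion (fun p : Fin m =>
          Finset.univ.filter (fun ω : Fin m → Fin n × (Fin g → F) => ω p ∈ Abad j0 p ω))).card := by
          apply Finset.card_le_card
          intro ω hω
          simp only [Finset.mem_filter, Finset.mem_univ, true_and] at hω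
          obtain ⟨p, hp⟩ := hω
          exact Finset.mem_biUnion.2 ⟨p, Finset.mem_univ _,
            by simp only [Finset.mem_filter, Finset.mem_univ, true_and]; exact hp⟩
      _ ≤ ∑ p : Fin m, (Finset.univ.filter
            (fun ω : Fin m → Fin n × (Fin g → F) => ω p ∈ Abad j0 p ω)).card :=
          Finset.card_biUnion_le
      _ ≤ ∑ _p : Fin m, q ^ (g-1) * Fintype.card (Fin n × (Fin g → F)) ^ (m-1) := by
          apply Finset.sum_le_sum
          intro p _
          apply count_pointwise p (Abad j0) (q ^ (g-1))
          · intro f f' hff'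
            have hW : Wspan j0 p f = Wspan j0 p f' := by
              unfold Wspan
              congr 1
              ext x
              simp only [Set.mem_image, Set.mem_setOf_eq]
              constructor
              · rintro ⟨p', ⟨h1, h2⟩, rfl⟩
                exact ⟨p', ⟨by rw [← hff' p' (ne_of_lt h2)]; exact h1, h2⟩,
                  by rw [← hff' p' (ne_of_lt h2)]⟩
              · rintro ⟨p', ⟨h1, h2⟩, rfl⟩
                exact ⟨p', ⟨by rw [hff' p' (ne_of_lt h2)]; exact h1, h2⟩,
                  by rw [hff' p' (ne_of_lt h2)]⟩
            unfold Abad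
            rw [hW]
          · intro f
            by_cases htop : Wspan j0 p f = ⊤
            · have hempty : Abad j0 p f = ∅ := by
                ext x; simp [Abad, htop]
              simp [hempty]
            · have hAeq : Abad j0 p f = {x : Fin n × (Fin g → F) | x.1 = j0 ∧ x.2 ∈ Wspan j0 p f} := by
                ext x; simp [Abad, htop]
              rw [hAeq, hqdef]
              exact ncard_proper hg j0 _ htop
      _ = m * (q ^ (g-1) * Fintype.card (Fin n × (Fin g → F)) ^ (m-1)) := by
          rw [Finset.sum_const, Finset.card_univ, Fintype.card_fin, smul_eq_mul]
  have hBeq : cardB = (m.choose i * (n-1)^(m-i)) * (q^g)^m := by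
    rw [hcardB, count_fst (P := fun a : Fin m → Fin n =>
      (Finset.univ.filter (fun p => a p = j0)).card = i), count_binom]
    congr 1
    rw [Fintype.card_fun, Fintype.card_fun, Fintype.card_fin, Fintype.card_fin, hqdef]
  have hTot : Nat.card (Fin m → Fin n × (Fin g → F)) = (n * q ^ g) ^ m := by
    rw [Nat.card_eq_fintype_card, Fintype.card_fun, Fintype.card_fin, hXcard]
  have hNatP : Nat.card {ω : Fin m → Fin n × (Fin g → F) // genRank m n g F ω j0 = i} = cardP := by
    rw [hcardP, Nat.card_eq_fintype_card, Fintype.card_subtype]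
  -- real versions
  have hn' : (0:ℝ) < n := by exact_mod_cast hn
  have hq' : (0:ℝ) < q := by exact_mod_cast hq2
  have htpos : (0:ℝ) < ((n : ℝ) * (q:ℝ) ^ g) ^ m :=
    pow_pos (mul_pos hn' (pow_pos hq' g)) m
  have ht : (Nat.card (Fin m → Fin n × (Fin g → F)) : ℝ) = ((n : ℝ) * (q:ℝ) ^ g) ^ m := by
    rw [hTot]; push_cast; ring
  have hbinom : (m.choose i : ℝ) * (1 / n) ^ i * (1 - 1 / n) ^ (m - i)
      = (cardB : ℝ) / ((n : ℝ) * (q:ℝ) ^ g) ^ m := by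
    have hcast : (cardB : ℝ)
        = (m.choose i : ℝ) * ((n:ℝ)-1)^(m-i) * ((q:ℝ)^g)^m := by
      rw [hBeq]
      push_cast [Nat.cast_sub hn]
      ring
    rw [hcast]
    rcases le_or_gt i m with him | him
    · have h1 : (1:ℝ) - 1/n = ((n:ℝ)-1)/n := by field_simp
      have hnm : ((n:ℝ)) ^ m = (n:ℝ)^i * (n:ℝ)^(m-i) := by
        rw [← pow_add]
        congr 1
        clear * - him
        omega
      rw [h1, div_pow, mul_pow, hnm]
      have hne1 : ((n:ℝ))^i ≠ 0 := by positivity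
      have hne2 : ((n:ℝ))^(m-i) ≠ 0 := by positivity
      have hne3 : ((q:ℝ)^g)^m ≠ 0 := by positivity
      rw [div_pow]
      field_simp
      ring
    · have hc0 : m.choose i = 0 := Nat.choose_eq_zero_of_lt him
      simp [hc0]
  rw [hNatP, ht, hbinom, div_sub_div_same, abs_div, abs_of_pos htpos]
  have habs : |(cardP:ℝ) - cardB| ≤ (cardBad : ℝ) := by
    have h1 : (cardP:ℝ) ≤ cardB + cardBad := by exact_mod_cast hPB
    have h2 : (cardB:ℝ) ≤ cardP + cardBad := by exact_mod_cast hBP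
    rw [abs_sub_le_iff]
    constructor <;> linarith
  have hq1 : q ^ (g-1) * q = q ^ g := by
    rw [← pow_succ]
    congr 1
    clear * - hg
    omega
  have hm1 : (n * q ^ g) ^ (m-1) * (n * q ^ g) = (n * q ^ g) ^ m := by
    rw [← pow_succ]
    congr 1
    clear * - hm
    omega
  have hnatineq : cardBad * q ≤ m * (n * q ^ g) ^ m := by
    calc cardBad * q ≤ (m * (q ^ (g-1) * (n * q ^ g) ^ (m-1))) * q :=
          Nat.mul_le_mul_right _ hBadBound
      _ = m * ((n * q ^ g) ^ (m-1) * (q ^ (g-1) * q)) := by ring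
      _ = m * ((n * q ^ g) ^ (m-1) * q ^ g) := by rw [hq1]
      _ ≤ m * ((n * q ^ g) ^ (m-1) * (n * q ^ g)) := by
          apply Nat.mul_le_mul_left
          apply Nat.mul_le_mul_left
          calc q ^ g = 1 * q ^ g := (one_mul _).symm
            _ ≤ n * q ^ g := Nat.mul_le_mul_right _ hn
      _ = m * (n * q ^ g) ^ m := by rw [hm1]
  have hstep : (cardBad:ℝ) / ((n : ℝ) * (q:ℝ) ^ g) ^ m ≤ (m:ℝ)/q := by
    rw [div_le_div_iff₀ htpos hq']
    have := hnatineq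
    calc (cardBad:ℝ) * q ≤ ((m * (n * q ^ g) ^ m : ℕ) : ℝ) := by exact_mod_cast this
      _ = (m:ℝ) * ((n : ℝ) * (q:ℝ) ^ g) ^ m := by push_cast; ring
  have hfin : (m:ℝ)/q < ε := by
    rw [div_lt_iff₀ hq']
    have h1 : (m:ℝ)/ε < q := by
      have h2 : (m:ℝ)/ε ≤ ⌈(m : ℝ) / ε⌉₊ := Nat.le_ceil _
      have h3 : ((⌈(m : ℝ) / ε⌉₊ : ℝ)) < q := by
        have : (⌈(m : ℝ) / ε⌉₊ + 1 : ℕ) ≤ q := hq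
        exact_mod_cast Nat.lt_of_succ_le this
      linarith
    calc (m:ℝ) = (m:ℝ)/ε * ε := by field_simp
      _ < q * ε := by apply mul_lt_mul_of_pos_right h1 hε
      _ = ε * q := by ring
  calc |(cardP:ℝ) - cardB| / ((n : ℝ) * (q:ℝ) ^ g) ^ m
      ≤ (cardBad:ℝ) / ((n : ℝ) * (q:ℝ) ^ g) ^ m := by gcongr
    _ ≤ (m:ℝ)/q := hstep
    _ < ε := hfin
end

section
/- In the packet reception model with parameters m, n, g and finite field F, for every ε > 0 there exists q0 such that for every finite field F with |F| ≥ q0, |Pr[rank of generation 1 = g] − Σ_{j=g}^{m} C(m,j)·(1/n)^j·(1−1/n)^(m−j)| < ε. That is, as the field size tends to infinity, the probability that a fixed generation is full rank converges to the binomial probability that at least g of the m packets are assigned to that generation. -/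
open Finset
open scoped Classical



lemma card_span_le (F : Type*) [Field F] [Fintype F] {ι : Type*} [Fintype ι] {g : ℕ}
    (v : ι → (Fin g → F)) :
    Nat.card (Submodule.span F (Set.range v) : Set (Fin g → F)) ≤
      Fintype.card F ^ Fintype.card ι := by
  classical
  have hsurj : Function.Surjective
      (fun c : ι → F => (⟨∑ i, c i • v i, Submodule.sum_mem _ fun i _ =>
        Submodule.smul_mem _ _ (Submodule.subset_span (Set.mem_range_self i))⟩ :
        (Submodule.span F (Set.range v) : Set (Fin g → F)))) := by
    rintro ⟨x, hx⟩
    obtain ⟨c, hc⟩ := (Submodule.mem_span_range_iff_exists_fun F).mp hx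
    exact ⟨c, Subtype.ext hc⟩
  calc Nat.card (Submodule.span F (Set.range v) : Set (Fin g → F))
      ≤ Nat.card (ι → F) := Nat.card_le_card_of_surjective _ hsurj
    _ = Fintype.card F ^ Fintype.card ι := by
        simp [Nat.card_eq_fintype_card, Fintype.card_fun]

lemma card_filter_mem_span_le (F : Type*) [Field F] [Fintype F] {m g : ℕ} {ι' : Type*}
    [Fintype ι'] [DecidableEq ι'] (p0 : Fin m) (t : ι' → Fin m) (ht : ∀ i, t i ≠ p0) :
    (univ.filter fun v : Fin m → (Fin g → F) =>
        v p0 ∈ Submodule.span F (Set.range fun i => v (t i))).card ≤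
      Fintype.card F ^ Fintype.card ι' * (Fintype.card F ^ g) ^ (m - 1) := by
  classical
  set res : (Fin m → (Fin g → F)) → ({p : Fin m // p ≠ p0} → (Fin g → F)) :=
    fun v p => v p.1 with hres
  rw [Finset.card_eq_sum_card_fiberwise (f := res) (t := univ) (fun v _ => mem_univ _)]
  have hfib : ∀ w : {p : Fin m // p ≠ p0} → (Fin g → F),
      ((univ.filter fun v : Fin m → (Fin g → F) =>
        v p0 ∈ Submodule.span F (Set.range fun i => v (t i))).filter
        fun v => res v = w).card ≤ Fintype.card F ^ Fintype.card ι' := by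
    intro w
    set S := Submodule.span F (Set.range fun i => w ⟨t i, ht i⟩) with hS
    have key : ∀ v ∈ ((univ.filter fun v : Fin m → (Fin g → F) =>
        v p0 ∈ Submodule.span F (Set.range fun i => v (t i))).filter
        fun v => res v = w), v p0 ∈ (S : Set (Fin g → F)).toFinset := by
      intro v hv
      simp only [mem_filter, mem_univ, true_and] at hv
      obtain ⟨h1, h2⟩ := hv
      rw [Set.mem_toFinset]
      convert h1 using 2
      subst h2
      rfl
    have hinj : ∀ v ∈ ((univ.filter fun v : Fin m → (Fin g → F) =>
        v p0 ∈ Submodule.span F (Set.range fun i => v (t i))).filter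
        fun v => res v = w), ∀ v' ∈ ((univ.filter fun v : Fin m → (Fin g → F) =>
        v p0 ∈ Submodule.span F (Set.range fun i => v (t i))).filter
        fun v => res v = w), v p0 = v' p0 → v = v' := by
      intro v hv v' hv' h
      simp only [mem_filter, mem_univ, true_and] at hv hv'
      funext p
      by_cases hp : p = p0
      · subst hp; exact h
      · have := congrFun (hv.2.trans hv'.2.symm) ⟨p, hp⟩
        exact this
    calc ((univ.filter fun v : Fin m → (Fin g → F) =>
        v p0 ∈ Submodule.span F (Set.range fun i => v (t i))).filter
        fun v => res v = w).card ≤ (S : Set (Fin g → F)).toFinset.card :=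
          Finset.card_le_card_of_injOn (fun v => v p0) key hinj
      _ = Nat.card (S : Set (Fin g → F)) := by
          rw [Set.toFinset_card, Nat.card_eq_fintype_card]
      _ ≤ Fintype.card F ^ Fintype.card ι' := card_span_le F _
  calc ∑ w ∈ univ, ((univ.filter fun v : Fin m → (Fin g → F) =>
        v p0 ∈ Submodule.span F (Set.range fun i => v (t i))).filter
        fun v => res v = w).card
      ≤ ∑ w : {p : Fin m // p ≠ p0} → (Fin g → F), Fintype.card F ^ Fintype.card ι' :=
        Finset.sum_le_sum fun w _ => hfib w
    _ = Fintype.card F ^ Fintype.card ι' * (Fintype.card F ^ g) ^ (m - 1) := by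
        rw [Finset.sum_const, card_univ, smul_eq_mul, mul_comm]
        congr 1
        rw [Fintype.card_fun, Fintype.card_fun, Fintype.card_fin]
        congr 1
        · congr 1
          simp [Fintype.card_subtype_compl]

lemma bad_count (F : Type*) [Field F] [Fintype F] {m n g : ℕ} (j0 : Fin n)
    (f : Fin m → Fin n) (hm : 0 < m) (hg : 0 < g)
    (hf : g ≤ (univ.filter fun p => f p = j0).card) :
    (univ.filter fun v : Fin m → (Fin g → F) =>
        (Matrix.of fun (p : {p : Fin m // f p = j0}) (k : Fin g) => v p.1 k).rank ≠ g).card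
      * Fintype.card F ≤ g * ((Fintype.card F ^ g) ^ m) := by
  classical
  set s := univ.filter fun p => f p = j0 with hs
  set ι : Fin g → Fin m := fun k => s.orderEmbOfCardLe hf k with hι
  have hιmem : ∀ k, f (ι k) = j0 := by
    intro k
    have := Finset.orderEmbOfCardLe_mem s hf k
    exact (Finset.mem_filter.mp this).2
  have hιinj : Function.Injective ι := fun a b h => (s.orderEmbOfCardLe hf).injective h
  -- if rank ≠ g then the rows at ι are dependent
  have hdep : ∀ v : Fin m → (Fin g → F),
      (Matrix.of fun (p : {p : Fin m // f p = j0}) (k : Fin g) => v p.1 k).rank ≠ g →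
      ¬ LinearIndependent F (fun k : Fin g => v (ι k)) := by
    intro v hv hli
    apply hv
    set M := (Matrix.of fun (p : {p : Fin m // f p = j0}) (k : Fin g) => v p.1 k) with hM
    refine le_antisymm (M.rank_le_card_width.trans (Fintype.card_fin g).le) ?_
    rw [Matrix.rank_eq_finrank_span_row]
    have hsub : Set.range (fun k : Fin g => v (ι k)) ⊆ Set.range M := by
      rintro x ⟨k, rfl⟩
      exact ⟨⟨ι k, hιmem k⟩, rfl⟩
    have h1 : g = Module.finrank F
        (Submodule.span F (Set.range fun k : Fin g => v (ι k))) := by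
      rw [finrank_span_eq_card hli, Fintype.card_fin]
    exact h1.le.trans (Submodule.finrank_mono (Submodule.span_mono hsub))
  -- union bound
  have hsubset : (univ.filter fun v : Fin m → (Fin g → F) =>
        (Matrix.of fun (p : {p : Fin m // f p = j0}) (k : Fin g) => v p.1 k).rank ≠ g) ⊆
      univ.biUnion (fun k : Fin g => univ.filter fun v : Fin m → (Fin g → F) =>
        v (ι k) ∈ Submodule.span F
          (Set.range fun k' : {k' : Fin g // k' ≠ k} => v (ι k'.1))) := by
    intro v hv
    simp only [mem_filter, mem_univ, true_and] at hv
    have := hdep v hv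
    rw [linearIndependent_iff_notMem_span] at this
    push_neg at this
    obtain ⟨k, hk⟩ := this
    rw [mem_biUnion]
    refine ⟨k, mem_univ _, ?_⟩
    simp only [mem_filter, mem_univ, true_and]
    convert hk using 3
    case e'_4 => rfl
    case e'_6 =>
    ext x
    simp only [Set.mem_range, Set.mem_image, Set.mem_diff, Set.mem_univ, Set.mem_singleton_iff,
      true_and]
    constructor
    · rintro ⟨k', rfl⟩
      exact ⟨k'.1, k'.2, rfl⟩
    · rintro ⟨k', hk', rfl⟩
      exact ⟨⟨k', hk'⟩, rfl⟩
  have hcard : (univ.filter fun v : Fin m → (Fin g → F) =>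
        (Matrix.of fun (p : {p : Fin m // f p = j0}) (k : Fin g) => v p.1 k).rank ≠ g).card ≤
      g * (Fintype.card F ^ (g - 1) * (Fintype.card F ^ g) ^ (m - 1)) := by
    calc _ ≤ _ := Finset.card_le_card hsubset
      _ ≤ ∑ k : Fin g, (univ.filter fun v : Fin m → (Fin g → F) =>
          v (ι k) ∈ Submodule.span F
            (Set.range fun k' : {k' : Fin g // k' ≠ k} => v (ι k'.1))).card :=
        Finset.card_biUnion_le
      _ ≤ ∑ k : Fin g, Fintype.card F ^ (g - 1) * (Fintype.card F ^ g) ^ (m - 1) := by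
        refine Finset.sum_le_sum fun k _ => ?_
        have := card_filter_mem_span_le F (g := g) (ι (k)) (fun k' : {k' : Fin g // k' ≠ k} => ι k'.1)
          (fun i => fun h => i.2 (hιinj h))
        have hc : Fintype.card {k' : Fin g // k' ≠ k} = g - 1 := by
          simp [Fintype.card_subtype_compl, Fintype.card_subtype_eq]
        rw [hc] at this
        exact this
      _ = g * (Fintype.card F ^ (g - 1) * (Fintype.card F ^ g) ^ (m - 1)) := by
        rw [Finset.sum_const, card_univ, Fintype.card_fin, smul_eq_mul]
  calc (univ.filter fun v : Fin m → (Fin g → F) =>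
        (Matrix.of fun (p : {p : Fin m // f p = j0}) (k : Fin g) => v p.1 k).rank ≠ g).card
      * Fintype.card F ≤
      g * (Fintype.card F ^ (g - 1) * (Fintype.card F ^ g) ^ (m - 1)) * Fintype.card F :=
        Nat.mul_le_mul_right _ hcard
    _ = g * ((Fintype.card F ^ (g-1) * Fintype.card F) * (Fintype.card F ^ g) ^ (m-1)) := by
        ring
    _ = g * (Fintype.card F ^ g * (Fintype.card F ^ g) ^ (m-1)) := by
        rw [← pow_succ, Nat.sub_add_cancel hg]
    _ = g * ((Fintype.card F ^ g) ^ m) := by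
        rw [← pow_succ', Nat.sub_add_cancel hm]

lemma good_count (F : Type*) [Field F] [Fintype F] {m n g : ℕ} (j0 : Fin n)
    (f : Fin m → Fin n) (hm : 0 < m) (hg : 0 < g)
    (hf : g ≤ (univ.filter fun p => f p = j0).card) :
    ((Fintype.card F ^ g) ^ m -
      (univ.filter fun v : Fin m → (Fin g → F) =>
        (Matrix.of fun (p : {p : Fin m // f p = j0}) (k : Fin g) => v p.1 k).rank = g).card)
      * Fintype.card F ≤ g * ((Fintype.card F ^ g) ^ m) := by
  have h1 := bad_count F j0 f hm hg hf
  have h2 := Finset.card_filter_add_card_filter_not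
    (s := (univ : Finset (Fin m → (Fin g → F))))
    (p := fun v : Fin m → (Fin g → F) =>
      (Matrix.of fun (p : {p : Fin m // f p = j0}) (k : Fin g) => v p.1 k).rank = g)
  have h3 : (univ.filter fun v : Fin m → (Fin g → F) =>
      ¬ ((Matrix.of fun (p : {p : Fin m // f p = j0}) (k : Fin g) => v p.1 k).rank = g)).card
      = (univ.filter fun v : Fin m → (Fin g → F) =>
        (Matrix.of fun (p : {p : Fin m // f p = j0}) (k : Fin g) => v p.1 k).rank ≠ g).card := rfl
  have h4 : (univ : Finset (Fin m → (Fin g → F))).card = (Fintype.card F ^ g) ^ m := by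
    simp [Fintype.card_fun]
  rw [h4, h3] at h2
  have h5 : (Fintype.card F ^ g) ^ m -
      (univ.filter fun v : Fin m → (Fin g → F) =>
        (Matrix.of fun (p : {p : Fin m // f p = j0}) (k : Fin g) => v p.1 k).rank = g).card
      = (univ.filter fun v : Fin m → (Fin g → F) =>
        (Matrix.of fun (p : {p : Fin m // f p = j0}) (k : Fin g) => v p.1 k).rank ≠ g).card :=
    Nat.sub_eq_of_eq_add (by rw [← h2, Nat.add_comm])
  rw [h5]
  exact h1


lemma fiber_fixed_set {m n : ℕ} (j0 : Fin n) (s : Finset (Fin m)) :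
    (univ.filter fun f : Fin m → Fin n => (univ.filter fun p => f p = j0) = s).card
      = (n - 1) ^ (m - s.card) := by
  classical
  have hiff : ∀ f : Fin m → Fin n,
      ((univ.filter fun p => f p = j0) = s) ↔ (∀ p, f p = j0 ↔ p ∈ s) := by
    intro f
    rw [Finset.ext_iff]
    apply forall_congr'
    intro p
    simp
  rw [Finset.filter_congr (fun f _ => hiff f)]
  have h1 : (univ.filter fun f : Fin m → Fin n => (∀ p, f p = j0 ↔ p ∈ s)).card
      = Fintype.card {f : Fin m → Fin n // ∀ p, f p = j0 ↔ p ∈ s} :=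
    (Fintype.card_subtype _).symm
  rw [h1, Fintype.card_congr (Equiv.subtypePiEquivPi (p := fun p (x : Fin n) => x = j0 ↔ p ∈ s)),
    Fintype.card_pi]
  have h2 : ∀ p : Fin m, Fintype.card {x : Fin n // x = j0 ↔ p ∈ s}
      = if p ∈ s then 1 else n - 1 := by
    intro p
    by_cases hp : p ∈ s
    · rw [if_pos hp, Fintype.card_congr (Equiv.subtypeEquivRight (q := fun x => x = j0)
        (by simp [hp]))]
      exact Fintype.card_subtype_eq j0
    · rw [if_neg hp, Fintype.card_congr (Equiv.subtypeEquivRight (q := fun x => ¬ (x = j0))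
        (by simp [hp]))]
      simp [Fintype.card_subtype_compl]
  rw [Finset.prod_congr rfl (fun p _ => h2 p)]
  rw [← Finset.prod_mul_prod_compl s]
  rw [Finset.prod_congr rfl (fun p hp => if_pos hp), Finset.prod_const_one, one_mul]
  have : ∀ p ∈ sᶜ, (if p ∈ s then 1 else n - 1) = n - 1 := by
    intro p hp
    rw [if_neg (Finset.mem_compl.mp hp)]
  rw [Finset.prod_congr rfl this, Finset.prod_const, Finset.card_compl, Fintype.card_fin]

lemma count_fiber {m n : ℕ} (j0 : Fin n) (j : ℕ) :
    (univ.filter fun f : Fin m → Fin n =>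
      (univ.filter fun p => f p = j0).card = j).card = m.choose j * (n - 1) ^ (m - j) := by
  classical
  rw [Finset.card_eq_sum_card_fiberwise
    (f := fun f : Fin m → Fin n => univ.filter fun p => f p = j0)
    (t := Finset.powersetCard j univ)
    (fun f hf => Finset.mem_powersetCard.mpr ⟨Finset.subset_univ _,
      (Finset.mem_filter.mp hf).2⟩)]
  have hfib : ∀ s ∈ Finset.powersetCard j (univ : Finset (Fin m)),
      ((univ.filter fun f : Fin m → Fin n =>
        (univ.filter fun p => f p = j0).card = j).filter
        (fun f => (univ.filter fun p => f p = j0) = s)).card = (n - 1) ^ (m - j) := by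
    intro s hs
    obtain ⟨-, hcard⟩ := Finset.mem_powersetCard.mp hs
    rw [Finset.filter_filter]
    have : ∀ f : Fin m → Fin n,
        (((univ.filter fun p => f p = j0).card = j) ∧ (univ.filter fun p => f p = j0) = s)
        ↔ ((univ.filter fun p => f p = j0) = s) := by
      intro f
      constructor
      · exact fun h => h.2
      · exact fun h => ⟨by rw [h, hcard], h⟩
    rw [Finset.filter_congr (fun f _ => this f), fiber_fixed_set j0 s, hcard]
  rw [Finset.sum_congr rfl hfib, Finset.sum_const, Finset.card_powersetCard, Finset.card_univ,
    Fintype.card_fin, smul_eq_mul]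


lemma omega_fiber_card (F : Type*) [Field F] [Fintype F] {m n g : ℕ} (f : Fin m → Fin n)
    (P : (Fin m → (Fin g → F)) → Prop) :
    (univ.filter fun ω : Fin m → Fin n × (Fin g → F) =>
        (fun p => (ω p).1) = f ∧ P (fun p => (ω p).2)).card
      = (univ.filter P).card := by
  classical
  refine Finset.card_bij' (fun ω _ => fun p => (ω p).2) (fun v _ => fun p => (f p, v p))
    ?_ ?_ ?_ ?_
  · intro ω hω
    simp only [mem_filter, mem_univ, true_and] at hω ⊢
    exact hω.2
  · intro v hv
    simp only [mem_filter, mem_univ, true_and] at hv ⊢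
    exact hv
  · intro ω hω
    simp only [mem_filter, mem_univ, true_and] at hω
    funext p
    exact Prod.ext (congrFun hω.1 p).symm rfl
  · intro v hv
    rfl

lemma rank_le_cnt (F : Type*) [Field F] [Fintype F] {m n g : ℕ}
    (ω : Fin m → Fin n × (Fin g → F)) (j0 : Fin n) :
    genRank m n g F ω j0 ≤ (univ.filter fun p => (ω p).1 = j0).card := by
  classical
  calc genRank m n g F ω j0 ≤ Fintype.card {p : Fin m // (ω p).1 = j0} :=
      Matrix.rank_le_card_height _
    _ = (univ.filter fun p => (ω p).1 = j0).card := Fintype.card_subtype _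


/-- As the field size tends to infinity, the probability that a fixed generation is
full rank (rank `g`) converges to the binomial probability that at least `g` of the `m`
packets are assigned to that generation. -/
theorem stmt_3 (m n g : ℕ) (hm : 0 < m) (hn : 0 < n) (hg : 0 < g) (ε : ℝ) (hε : 0 < ε) :
    ∃ q0 : ℕ, ∀ (F : Type) [Field F] [Fintype F], q0 ≤ Fintype.card F →
      |(Nat.card {ω : Fin m → Fin n × (Fin g → F) //
            genRank m n g F ω ⟨0, hn⟩ = g} : ℝ) /
          (Nat.card (Fin m → Fin n × (Fin g → F)) : ℝ) -
        ∑ j ∈ Finset.Icc g m, (m.choose j : ℝ) * (1 / n) ^ j * (1 - 1 / n) ^ (m - j)| < ε := by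
  classical
  refine ⟨max 2 (Nat.ceil ((g : ℝ) / ε) + 1), ?_⟩
  intro F _ _ hqF
  have hq2 : 2 ≤ Fintype.card F := le_trans (le_max_left _ _) hqF
  set q := Fintype.card F with hqdef
  have hq1 : 0 < q := by omega
  set j0 : Fin n := ⟨0, hn⟩ with hj0
  set cnt : (Fin m → Fin n) → ℕ := fun f => (univ.filter fun p => f p = j0).card with hcnt
  set π : (Fin m → Fin n × (Fin g → F)) → (Fin m → Fin n) := fun ω p => (ω p).1 with hπ
  set A := univ.filter (fun ω : Fin m → Fin n × (Fin g → F) => genRank m n g F ω j0 = g)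
    with hA
  set GB := univ.filter (fun f : Fin m → Fin n => g ≤ cnt f) with hGB
  set goodf : (Fin m → Fin n) → ℕ := fun f => (univ.filter fun v : Fin m → (Fin g → F) =>
    (Matrix.of fun (p : {p : Fin m // f p = j0}) (k : Fin g) => v p.1 k).rank = g).card
    with hgoodf
  -- (F1)
  have hF1 : ∀ ω ∈ A, π ω ∈ GB := by
    intro ω hω
    rw [hA, mem_filter] at hω
    rw [hGB, mem_filter]
    exact ⟨mem_univ _, hω.2 ▸ rank_le_cnt F ω j0⟩
  -- (F2) fiber cards of A
  have hF2 : ∀ f ∈ GB, (A.filter fun ω => π ω = f).card = goodf f := by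
    intro f hf
    have hcard : (A.filter fun ω => π ω = f).card =
        (univ.filter fun v : Fin m → (Fin g → F) =>
          (Matrix.of fun (p : {p : Fin m // f p = j0}) (k : Fin g) => v p.1 k).rank = g).card := by
      refine Finset.card_bij' (fun ω _ => fun p => (ω p).2) (fun v _ => fun p => (f p, v p))
        ?_ ?_ ?_ ?_
      · intro ω hω
        rw [mem_filter] at hω
        obtain ⟨hω1, h2⟩ := hω
        rw [hA, mem_filter] at hω1
        rw [mem_filter]
        refine ⟨mem_univ _, ?_⟩
        subst h2
        exact hω1.2
      · intro v hv
        rw [mem_filter] at hv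
        rw [mem_filter, hA, mem_filter]
        exact ⟨⟨mem_univ _, hv.2⟩, rfl⟩
      · intro ω hω
        rw [mem_filter] at hω
        funext p
        exact Prod.ext (congrFun hω.2 p).symm rfl
      · intro v hv
        rfl
    rw [hcard]
  have hgoodle : ∀ f : Fin m → Fin n, goodf f ≤ (q ^ g) ^ m := by
    intro f
    calc goodf f ≤ (univ : Finset (Fin m → (Fin g → F))).card := Finset.card_filter_le _ _
      _ = (q ^ g) ^ m := by simp [Fintype.card_fun, hqdef]
  -- (F3)
  have hF3 : A.card = ∑ f ∈ GB, goodf f := by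
    rw [Finset.card_eq_sum_card_fiberwise hF1]
    exact Finset.sum_congr rfl hF2
  -- (F4)
  have hF4 : A.card + ∑ f ∈ GB, ((q ^ g) ^ m - goodf f) = GB.card * (q ^ g) ^ m := by
    rw [hF3, ← Finset.sum_add_distrib]
    have : ∀ f ∈ GB, goodf f + ((q ^ g) ^ m - goodf f) = (q ^ g) ^ m :=
      fun f _ => Nat.add_sub_cancel' (hgoodle f)
    rw [Finset.sum_congr rfl this, Finset.sum_const, smul_eq_mul]
  -- (F5)
  have hF5 : (∑ f ∈ GB, ((q ^ g) ^ m - goodf f)) * q ≤ g * (GB.card * (q ^ g) ^ m) := by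
    rw [Finset.sum_mul]
    calc ∑ f ∈ GB, ((q ^ g) ^ m - goodf f) * q ≤ ∑ f ∈ GB, g * ((q ^ g) ^ m) := by
          refine Finset.sum_le_sum fun f hf => ?_
          rw [hGB, mem_filter] at hf
          exact good_count F j0 f hm hg hf.2
      _ = g * (GB.card * (q ^ g) ^ m) := by
          rw [Finset.sum_const, smul_eq_mul]; ring
  -- (F6)
  have hF6 : GB.card = ∑ j ∈ Finset.Icc g m, m.choose j * (n - 1) ^ (m - j) := by
    rw [hGB, Finset.card_eq_sum_card_fiberwise (f := cnt) (t := Finset.Icc g m)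
      (fun f hf => by
        rw [Finset.mem_coe, mem_filter] at hf
        rw [Finset.mem_coe, Finset.mem_Icc]
        refine ⟨hf.2, ?_⟩
        calc cnt f ≤ (univ : Finset (Fin m)).card := Finset.card_filter_le _ _
          _ = m := by simp)]
    refine Finset.sum_congr rfl fun j hj => ?_
    rw [Finset.mem_Icc] at hj
    rw [Finset.filter_filter]
    rw [Finset.filter_congr (q := fun f : Fin m → Fin n => cnt f = j)
      (fun f _ => by constructor
                     · exact fun h => h.2
                     · exact fun h => ⟨h ▸ hj.1, h⟩)]
    exact count_fiber j0 j
  -- (F7)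
  have hF7 : GB.card ≤ n ^ m := by
    calc GB.card ≤ (univ : Finset (Fin m → Fin n)).card := Finset.card_filter_le _ _
      _ = n ^ m := by simp [Fintype.card_fun]
  -- cast the goal
  have hNA : Nat.card {ω : Fin m → Fin n × (Fin g → F) // genRank m n g F ω j0 = g}
      = A.card := by
    rw [Nat.card_eq_fintype_card, hA]
    exact Fintype.card_subtype _
  have hT : Nat.card (Fin m → Fin n × (Fin g → F)) = (n * q ^ g) ^ m := by
    simp [Nat.card_eq_fintype_card, Fintype.card_fun, mul_comm, hqdef]
  set a := A.card with ha
  set b := GB.card * (q ^ g) ^ m with hb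
  have hab : a ≤ b := by omega
  have hbT : b ≤ (n * q ^ g) ^ m := by
    rw [hb, mul_pow]
    exact Nat.mul_le_mul_right _ hF7
  have hTpos : (0 : ℝ) < ((n * q ^ g) ^ m : ℕ) := by
    have : 0 < (n * q ^ g) ^ m := by positivity
    exact_mod_cast this
  have hqpos : (0 : ℝ) < (q : ℝ) := by exact_mod_cast hq1
  -- the binomial sum equals b / T
  have hS : ∑ j ∈ Finset.Icc g m, (m.choose j : ℝ) * (1 / n) ^ j * (1 - 1 / n) ^ (m - j)
      = (b : ℝ) / ((n * q ^ g) ^ m : ℕ) := by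
    have hn0 : (n : ℝ) ≠ 0 := by exact_mod_cast hn.ne'
    have hterm : ∀ j ∈ Finset.Icc g m,
        (m.choose j : ℝ) * (1 / n) ^ j * (1 - 1 / n) ^ (m - j)
          = (m.choose j * (n - 1) ^ (m - j) : ℕ) / (n : ℝ) ^ m := by
      intro j hj
      rw [Finset.mem_Icc] at hj
      have h1 : (1 : ℝ) - 1 / n = ((n - 1 : ℕ) : ℝ) / n := by
        rw [Nat.cast_sub (show 1 ≤ n from hn), Nat.cast_one]
        field_simp
      have hnm : (n:ℝ)^j * (n:ℝ)^(m-j) = (n:ℝ)^m := by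
        rw [← pow_add]
        congr 1
        omega
      rw [h1]
      push_cast
      rw [div_pow, div_pow, one_pow, ← hnm]
      field_simp
    rw [Finset.sum_congr rfl hterm, ← Finset.sum_div]
    rw [hb, hF6]
    push_cast
    rw [mul_pow]
    rw [div_eq_div_iff (by positivity) (by positivity)]
    push_cast
    ring
  rw [hNA, hT, hS]
  rw [div_sub_div_same, abs_div, abs_of_pos hTpos, abs_sub_comm,
    abs_of_nonneg (sub_nonneg.mpr (by exact_mod_cast hab))]
  have key : ((b : ℝ) - a) / ((n * q ^ g) ^ m : ℕ) ≤ (g : ℝ) / q := by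
    rw [div_le_div_iff₀ hTpos hqpos]
    have h2 : (b - a) * q ≤ g * ((n * q ^ g) ^ m) := by
      have hba : b - a = ∑ f ∈ GB, ((q ^ g) ^ m - goodf f) := by omega
      calc (b - a) * q = (∑ f ∈ GB, ((q ^ g) ^ m - goodf f)) * q := by rw [hba]
        _ ≤ g * b := hF5
        _ ≤ g * ((n * q ^ g) ^ m) := Nat.mul_le_mul_left _ hbT
    calc ((b : ℝ) - a) * q = ((b - a : ℕ) : ℝ) * q := by
          rw [Nat.cast_sub hab]
      _ ≤ (g : ℝ) * ((n * q ^ g) ^ m : ℕ) := by exact_mod_cast h2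
  refine lt_of_le_of_lt key ?_
  rw [div_lt_iff₀ hqpos]
  have hql : ((Nat.ceil ((g : ℝ) / ε) + 1 : ℕ) : ℝ) ≤ (q : ℝ) := by
    exact_mod_cast le_trans (le_max_right _ _) hqF
  have : (g : ℝ) / ε < q := by
    calc (g : ℝ) / ε ≤ Nat.ceil ((g : ℝ) / ε) := Nat.le_ceil _
      _ < (Nat.ceil ((g : ℝ) / ε) + 1 : ℕ) := by push_cast; linarith
      _ ≤ q := hql
  calc (g : ℝ) = (g : ℝ) / ε * ε := by field_simp
    _ < q * ε := by
        apply mul_lt_mul_of_pos_right this hε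
    _ = ε * q := by ring
end

section
/- Fix a real number r > 0 and a natural number i. Then the binomial probability mass converges to the Poisson probability mass: lim_{n→∞} C(⌈r·n⌉, i)·(1/n)^i·(1−1/n)^(⌈r·n⌉−i) = e^(−r)·r^i / i!. -/
open Filter

lemma stmt6_hA (r : ℝ) (hr : 0 < r) :
    Tendsto (fun n : ℕ => (⌈r * n⌉₊ : ℝ) / n) atTop (nhds r) := by
  have hlow : Tendsto (fun _ : ℕ => r) atTop (nhds r) := tendsto_const_nhds
  have hhigh : Tendsto (fun n : ℕ => r + 1 / n) atTop (nhds r) := by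
    have := tendsto_one_div_atTop_nhds_zero_nat (𝕜 := ℝ)
    simpa using tendsto_const_nhds.add this
  apply tendsto_of_tendsto_of_tendsto_of_le_of_le' hlow hhigh
  · filter_upwards [eventually_ge_atTop 1] with n hn
    have hn0 : (0 : ℝ) < n := by exact_mod_cast hn
    rw [le_div_iff₀ hn0]
    calc r * n ≤ ⌈r * n⌉₊ := Nat.le_ceil _
    _ = _ := rfl
  · filter_upwards [eventually_ge_atTop 1] with n hn
    have hn0 : (0 : ℝ) < n := by exact_mod_cast hn
    rw [div_le_iff₀ hn0]
    have h1 : (⌈r * n⌉₊ : ℝ) < r * n + 1 :=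
      Nat.ceil_lt_add_one (by positivity)
    calc (⌈r * n⌉₊ : ℝ) ≤ r * n + 1 := h1.le
    _ = (r + 1 / n) * n := by field_simp

lemma stmt6_hlog : Tendsto (fun n : ℕ => (n : ℝ) * Real.log (1 - 1 / n)) atTop (nhds (-1)) := by
  have h := (Real.tendsto_mul_log_one_add_div_atTop (-1)).comp
    (tendsto_natCast_atTop_atTop (R := ℝ))
  apply h.congr
  intro n
  simp [Function.comp, sub_eq_add_neg, neg_div]

lemma stmt6_hexp (r : ℝ) (hr : 0 < r) (i : ℕ) :
    Tendsto (fun n : ℕ => (1 - 1 / (n : ℝ)) ^ (⌈r * n⌉₊ - i)) atTop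
      (nhds (Real.exp (-r))) := by
  have harg : Tendsto (fun n : ℕ => ((⌈r * n⌉₊ - i : ℕ) : ℝ) * Real.log (1 - 1 / n))
      atTop (nhds (-r)) := by
    have hmain : Tendsto
        (fun n : ℕ => (((⌈r * n⌉₊ - i : ℕ) : ℝ) / n) * ((n : ℝ) * Real.log (1 - 1 / n)))
        atTop (nhds (r * (-1))) := by
      refine Tendsto.mul ?_ stmt6_hlog
      have hsub : Tendsto (fun n : ℕ => (⌈r * n⌉₊ : ℝ) / n - (i : ℝ) / n) atTop (nhds r) := by
        have : Tendsto (fun n : ℕ => (i : ℝ) / n) atTop (nhds 0) := by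
          simpa [div_eq_mul_inv] using tendsto_one_div_atTop_nhds_zero_nat.const_mul (i : ℝ)
        simpa using (stmt6_hA r hr).sub this
      apply hsub.congr'
      filter_upwards [eventually_ge_atTop (⌈(i : ℝ) / r⌉₊ + 1)] with n hn
      have hceil : i ≤ ⌈r * n⌉₊ := by
        have h1 : ((i : ℝ) / r) ≤ (⌈(i : ℝ) / r⌉₊ : ℕ) := Nat.le_ceil _
        have h2 : (⌈(i : ℝ) / r⌉₊ : ℝ) ≤ n := by exact_mod_cast (Nat.le_of_succ_le hn)
        have : (i : ℝ) ≤ r * n := by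
          rw [div_le_iff₀ hr] at h1
          calc (i : ℝ) ≤ (⌈(i : ℝ) / r⌉₊ : ℝ) * r := h1
          _ ≤ n * r := by nlinarith
          _ = r * n := by ring
        exact_mod_cast this.trans (Nat.le_ceil _)
      rw [Nat.cast_sub hceil, sub_div]
    have heq : (fun n : ℕ => (((⌈r * n⌉₊ - i : ℕ) : ℝ) / n) * ((n : ℝ) * Real.log (1 - 1 / n)))
        =ᶠ[atTop] (fun n : ℕ => ((⌈r * n⌉₊ - i : ℕ) : ℝ) * Real.log (1 - 1 / n)) := by
      filter_upwards [eventually_ge_atTop 1] with n hn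
      have hn0 : (n : ℝ) ≠ 0 := by positivity
      field_simp
    simpa using hmain.congr' heq
  have := (Real.continuous_exp.tendsto _).comp harg
  apply this.congr'
  filter_upwards [eventually_ge_atTop 2] with n hn
  have hpos : (0 : ℝ) < 1 - 1 / n := by
    have : (1 : ℝ) / n ≤ 1 / 2 := by
      apply one_div_le_one_div_of_le <;> [norm_num; exact_mod_cast hn]
    linarith
  simp only [Function.comp]
  rw [Real.exp_nat_mul, Real.exp_log hpos]

lemma stmt6_hprod (r : ℝ) (hr : 0 < r) (i : ℕ) :
    Tendsto (fun n : ℕ => ∏ j ∈ Finset.range i, (((⌈r * n⌉₊ : ℝ)) - j) / n) atTop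
      (nhds (r ^ i)) := by
  have : Tendsto (fun n : ℕ => ∏ j ∈ Finset.range i, (((⌈r * n⌉₊ : ℝ)) - j) / n) atTop
      (nhds (∏ _j ∈ Finset.range i, r)) := by
    apply tendsto_finset_prod
    intro j _
    have hj : Tendsto (fun n : ℕ => (j : ℝ) / n) atTop (nhds 0) := by
      simpa [div_eq_mul_inv] using tendsto_one_div_atTop_nhds_zero_nat.const_mul (j : ℝ)
    have := (stmt6_hA r hr).sub hj
    simp only [sub_zero] at this
    apply this.congr
    intro n
    rw [sub_div]
  simpa using this

/-- Poisson limit of the binomial: for fixed `r > 0` and `i`,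
`C(⌈rn⌉, i) (1/n)^i (1 - 1/n)^(⌈rn⌉ - i) → e^(-r) r^i / i!` as `n → ∞`. -/
theorem stmt_6 (r : ℝ) (hr : 0 < r) (i : ℕ) :
    Tendsto (fun n : ℕ =>
        ((Nat.ceil (r * n)).choose i : ℝ) * (1 / n) ^ i *
          (1 - 1 / n) ^ (Nat.ceil (r * n) - i))
      atTop (nhds (Real.exp (-r) * r ^ i / (i.factorial : ℝ))) := by
  have hg : Tendsto (fun n : ℕ =>
      ((∏ j ∈ Finset.range i, (((⌈r * n⌉₊ : ℝ)) - j) / n) / (i.factorial : ℝ)) *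
        (1 - 1 / (n : ℝ)) ^ (⌈r * n⌉₊ - i)) atTop
      (nhds (r ^ i / (i.factorial : ℝ) * Real.exp (-r))) :=
    ((stmt6_hprod r hr i).div_const _).mul (stmt6_hexp r hr i)
  have hlim : r ^ i / (i.factorial : ℝ) * Real.exp (-r)
      = Real.exp (-r) * r ^ i / (i.factorial : ℝ) := by ring
  rw [← hlim]
  apply hg.congr'
  filter_upwards [eventually_ge_atTop (⌈(i : ℝ) / r⌉₊ + 1), eventually_ge_atTop 1]
    with n hn hn1
  have hn0 : (n : ℝ) ≠ 0 := by positivity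
  have hceil : i ≤ ⌈r * n⌉₊ := by
    have h1 : ((i : ℝ) / r) ≤ (⌈(i : ℝ) / r⌉₊ : ℕ) := Nat.le_ceil _
    have h2 : (⌈(i : ℝ) / r⌉₊ : ℝ) ≤ n := by exact_mod_cast (Nat.le_of_succ_le hn)
    have : (i : ℝ) ≤ r * n := by
      rw [div_le_iff₀ hr] at h1
      calc (i : ℝ) ≤ (⌈(i : ℝ) / r⌉₊ : ℝ) * r := h1
      _ ≤ n * r := by nlinarith
      _ = r * n := by ring
    exact_mod_cast this.trans (Nat.le_ceil _)
  congr 1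
  have hdesc : ((⌈r * n⌉₊ : ℕ).descFactorial i : ℝ)
      = ∏ j ∈ Finset.range i, ((⌈r * n⌉₊ : ℝ) - j) := by
    rw [Nat.descFactorial_eq_prod_range]
    push_cast
    apply Finset.prod_congr rfl
    intro j hj
    have hji : j < i := Finset.mem_range.mp hj
    rw [Nat.cast_sub (le_of_lt (lt_of_lt_of_le hji hceil))]
  have hchoose : ((⌈r * n⌉₊ : ℕ).choose i : ℝ)
      = (∏ j ∈ Finset.range i, ((⌈r * n⌉₊ : ℝ) - j)) / (i.factorial : ℝ) := by
    rw [← hdesc, eq_div_iff (by exact_mod_cast i.factorial_ne_zero)]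
    rw [← Nat.cast_mul]
    congr 1
    rw [Nat.descFactorial_eq_factorial_mul_choose]
    ring
  rw [hchoose, Finset.prod_div_distrib, Finset.prod_const, one_div, inv_pow,
    ← div_eq_mul_inv, div_div, div_div, Finset.card_range, mul_comm ((n:ℝ)^i)]
end

section
/- Let g be a positive integer, r0 ≥ 0 and c ≥ 0 real numbers, and P(x) = Σ_{i=2}^{D} p_i x^i any polynomial with nonnegative coefficients, and define f(x) = 1 − e^(−(r0 + c·P′(x)))·Σ_{i=0}^{g−1} (r0 + c·P′(x))^i / i!. Then sup_{x ∈ [0,1]} f(x) ≤ 1 − e^(−(r0 + c·P′(1)))·Σ_{i=0}^{g−1} (r0 + c·P′(1))^i / i! < 1. Consequently, for every x0 ∈ [0,1) the convergence condition 'x < f(x) for all x ∈ (x0, 1)' fails; i.e., with a finite-average-degree polynomial outer code the density evolution cannot drive the fraction of full rank generations all the way to 1, so a pre-code is necessary. -/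
/-- The derivative `P'(x) = Σ_{i=2}^{D} i p_i x^(i-1)` of the check degree distribution
polynomial `P(x) = Σ_{i=2}^{D} p_i x^i`. -/
noncomputable def Pderiv (D : ℕ) (p : ℕ → ℝ) (x : ℝ) : ℝ :=
  ∑ i ∈ Finset.Icc 2 D, (i : ℝ) * p i * x ^ (i - 1)

/-- The density-evolution map of Gamma network codes,
`f(x) = 1 - e^(-(r0 + c P'(x))) Σ_{j=0}^{g-1} (r0 + c P'(x))^j / j!`,
written with `c = g (1 - R)`. -/
noncomputable def deMap (g : ℕ) (r0 c : ℝ) (D : ℕ) (p : ℕ → ℝ) (x : ℝ) : ℝ :=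
  1 - Real.exp (-(r0 + c * Pderiv D p x)) *
        ∑ j ∈ Finset.range g, (r0 + c * Pderiv D p x) ^ j / (j.factorial : ℝ)

noncomputable def S (g : ℕ) (t : ℝ) : ℝ :=
  Real.exp (-t) * ∑ j ∈ Finset.range g, t ^ j / (j.factorial : ℝ)

lemma hasDerivS (g : ℕ) (hg : 1 ≤ g) (t : ℝ) :
    HasDerivAt (S g) (-(Real.exp (-t) * t ^ (g - 1) / ((g - 1).factorial : ℝ))) t := by
  induction g, hg using Nat.le_induction with
  | base =>
    have h1 : HasDerivAt (fun t : ℝ => Real.exp (-t)) (Real.exp (-t) * (-1)) t :=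
      (hasDerivAt_neg t).exp
    have : S 1 = fun t : ℝ => Real.exp (-t) := by
      funext s; simp [S]
    rw [this]
    simpa using h1
  | succ g hg ih =>
    have h1 : HasDerivAt (fun t : ℝ => Real.exp (-t)) (Real.exp (-t) * (-1)) t :=
      (hasDerivAt_neg t).exp
    have h2 : HasDerivAt (fun t : ℝ => t ^ g / (g.factorial : ℝ))
        ((g : ℝ) * t ^ (g - 1) / (g.factorial : ℝ)) t :=
      (hasDerivAt_pow g t).div_const _
    have h3 := h1.mul h2
    have hS : S (g + 1) = fun t => S g t + Real.exp (-t) * (t ^ g / (g.factorial : ℝ)) := by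
      funext s; simp [S, Finset.sum_range_succ, mul_add]
    rw [hS]
    have h4 := ih.add h3
    refine h4.congr_deriv ?_
    have hfac : ((g : ℝ)) * ((g - 1).factorial : ℝ) = (g.factorial : ℝ) := by
      rw [← Nat.cast_mul, Nat.mul_factorial_pred (by omega)]
    have hfp : ((g - 1).factorial : ℝ) ≠ 0 := Nat.cast_ne_zero.2 (Nat.factorial_ne_zero _)
    have hgp : ((g.factorial : ℝ)) ≠ 0 := Nat.cast_ne_zero.2 (Nat.factorial_ne_zero _)
    simp only [Nat.add_sub_cancel]
    have hgne : (g : ℝ) ≠ 0 := Nat.cast_ne_zero.2 (by omega)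
    rw [← hfac]
    field_simp
    ring

lemma S_antitone (g : ℕ) (hg : 1 ≤ g) : AntitoneOn (S g) (Set.Ici (0 : ℝ)) := by
  apply antitoneOn_of_hasDerivWithinAt_nonpos (convex_Ici 0)
    (fun t _ => (hasDerivS g hg t).continuousAt.continuousWithinAt)
    (f' := fun t => -(Real.exp (-t) * t ^ (g - 1) / ((g - 1).factorial : ℝ)))
    (fun t _ => (hasDerivS g hg t).hasDerivWithinAt)
  intro t ht
  rw [interior_Ici] at ht
  have h1 : (0:ℝ) ≤ Real.exp (-t) * t ^ (g - 1) / ((g - 1).factorial : ℝ) := by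
    exact div_nonneg (mul_nonneg (Real.exp_pos _).le (pow_nonneg (le_of_lt ht) _))
      (Nat.cast_nonneg _)
  linarith


/-- With a finite-degree polynomial outer code the density-evolution map is bounded on
`[0,1]` by its value at `1`, which is strictly less than `1`; consequently the
convergence condition `x < f(x)` for all `x ∈ (x0, 1)` fails for every `x0 ∈ [0, 1)`,
so the density evolution cannot drive the fraction of full rank generations to `1`
and a pre-code is necessary. -/
theorem stmt_13 (g : ℕ) (hg : 0 < g) (r0 c : ℝ) (hr0 : 0 ≤ r0) (hc : 0 ≤ c)
    (D : ℕ) (p : ℕ → ℝ) (hp : ∀ i, 0 ≤ p i) :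
    (∀ x ∈ Set.Icc (0 : ℝ) 1, deMap g r0 c D p x ≤ deMap g r0 c D p 1) ∧
    deMap g r0 c D p 1 < 1 ∧
    ∀ x0 ∈ Set.Ico (0 : ℝ) 1, ¬ (∀ x ∈ Set.Ioo x0 1, x < deMap g r0 c D p x) := by
  have hP0 : ∀ x ∈ Set.Icc (0:ℝ) 1, 0 ≤ Pderiv D p x := by
    intro x hx
    apply Finset.sum_nonneg
    intro i _
    exact mul_nonneg (mul_nonneg (by positivity) (hp i)) (pow_nonneg hx.1 _)
  have hPle : ∀ x ∈ Set.Icc (0:ℝ) 1, Pderiv D p x ≤ Pderiv D p 1 := by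
    intro x hx
    apply Finset.sum_le_sum
    intro i _
    have h1 : x ^ (i - 1) ≤ 1 ^ (i - 1) := pow_le_pow_left₀ hx.1 hx.2 _
    have := hp i
    have : (0:ℝ) ≤ (i:ℝ) * p i := by positivity
    nlinarith
  have hT0 : ∀ x ∈ Set.Icc (0:ℝ) 1, (0:ℝ) ≤ r0 + c * Pderiv D p x := by
    intro x hx
    exact add_nonneg hr0 (mul_nonneg hc (hP0 x hx))
  have h1m : (1:ℝ) ∈ Set.Icc (0:ℝ) 1 := by norm_num
  have hSdef : ∀ x, deMap g r0 c D p x = 1 - S g (r0 + c * Pderiv D p x) := by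
    intro x; rfl
  have key : ∀ x ∈ Set.Icc (0:ℝ) 1, deMap g r0 c D p x ≤ deMap g r0 c D p 1 := by
    intro x hx
    rw [hSdef, hSdef]
    have hle : r0 + c * Pderiv D p x ≤ r0 + c * Pderiv D p 1 := by
      have := hPle x hx; nlinarith
    have := S_antitone g hg (hT0 x hx) (hT0 1 h1m) hle
    linarith
  have hlt : deMap g r0 c D p 1 < 1 := by
    rw [hSdef]
    have hS : 0 < S g (r0 + c * Pderiv D p 1) := by
      apply mul_pos (Real.exp_pos _)
      apply Finset.sum_pos'
      · intro j _
        have h := hT0 1 h1m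
        positivity
      · exact ⟨0, Finset.mem_range.2 hg, by norm_num⟩
    linarith
  refine ⟨key, hlt, ?_⟩
  intro x0 hx0 hcontra
  set M := deMap g r0 c D p 1 with hM
  set x := (max x0 M + 1) / 2 with hxdef
  have hmax : max x0 M < 1 := max_lt hx0.2 hlt
  have hx1 : x < 1 := by rw [hxdef]; linarith
  have hxgt : max x0 M < x := by rw [hxdef]; linarith
  have hxIoo : x ∈ Set.Ioo x0 1 := ⟨lt_of_le_of_lt (le_max_left _ _) hxgt, hx1⟩
  have hxIcc : x ∈ Set.Icc (0:ℝ) 1 := ⟨by linarith [hx0.1, le_max_left x0 M, hxgt], le_of_lt hx1⟩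
  have h1 := hcontra x hxIoo
  have h2 := key x hxIcc
  have h3 : M ≤ max x0 M := le_max_right _ _
  linarith
end
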